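/- arXiv:2104.15045 — 3 statements merged into one kernel-verified Lean document; each statement's English description precedes it below -/
import Mathlib

section
/- Let f : ℝ^m ⇒ ℝ be a set-valued mapping with convex graph, and Y ⊂ ℝ^m an open convex set on which f is nonempty-valued. If f is locally bounded from below at some y₀ ∈ Y, then for every y ∈ Y the set f(y) is bounded from below. -/
theorem stmt_9 (m : ℕ)
    (f : (Fin m → ℝ) → Set ℝ)
    (hf : Convex ℝ {p : (Fin m → ℝ) × ℝ | p.2 ∈ f p.1})
    (Y : Set (Fin m → ℝ)) (hYopen : IsOpen Y) (hYconv : Convex ℝ Y)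
    (hne : ∀ y ∈ Y, (f y).Nonempty)
    (y₀ : Fin m → ℝ) (hy₀ : y₀ ∈ Y)
    (hlb : ∃ m₀ : ℝ, ∃ A : Set (Fin m → ℝ), IsOpen A ∧ y₀ ∈ A ∧ A ⊆ Y ∧
      ∀ y ∈ A, ∀ μ ∈ f y, m₀ ≤ μ) :
    ∀ y ∈ Y, BddBelow (f y) := by
  obtain ⟨m₀, A, hAo, hy₀A, hAY, hbd⟩ := hlb
  intro y hy
  -- find small t > 0 such that w = y₀ + t • (y₀ - y) ∈ A
  obtain ⟨ε, hε, hball⟩ := Metric.isOpen_iff.mp hAo y₀ hy₀A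
  set t : ℝ := ε / (2 * (dist y₀ y + 1)) with ht_def
  have hden : (0:ℝ) < 2 * (dist y₀ y + 1) := by positivity
  have ht : 0 < t := div_pos hε hden
  set w : Fin m → ℝ := y₀ + t • (y₀ - y) with hw_def
  have hwA : w ∈ A := by
    apply hball
    have : dist w y₀ = t * dist y₀ y := by
      rw [dist_eq_norm, dist_eq_norm,
        show w - y₀ = t • (y₀ - y) by rw [hw_def]; abel, norm_smul,
        Real.norm_eq_abs, abs_of_pos ht]
    rw [Metric.mem_ball, this, ht_def]
    calc ε / (2 * (dist y₀ y + 1)) * dist y₀ y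
        ≤ ε / (2 * (dist y₀ y + 1)) * (dist y₀ y + 1) := by
          apply mul_le_mul_of_nonneg_left (by linarith) (le_of_lt ht)
      _ = ε / 2 := by field_simp
      _ < ε := by linarith
  obtain ⟨ν, hν⟩ := hne w (hAY hwA)
  refine ⟨((1 + t) * m₀ - ν) / t, ?_⟩
  intro μ hμ
  have h1t : (0:ℝ) < 1 + t := by linarith
  have hl : (0:ℝ) ≤ t / (1 + t) := by positivity
  have hl' : (0:ℝ) ≤ 1 / (1 + t) := by positivity
  have hsum : t / (1 + t) + 1 / (1 + t) = 1 := by field_simp; ring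
  have hconv := hf (show ((y, μ) : (Fin m → ℝ) × ℝ) ∈ {p : (Fin m → ℝ) × ℝ | p.2 ∈ f p.1} from hμ)
    (show ((w, ν) : (Fin m → ℝ) × ℝ) ∈ {p : (Fin m → ℝ) × ℝ | p.2 ∈ f p.1} from hν) hl hl' hsum
  have hpt : (t / (1 + t)) • y + (1 / (1 + t)) • w = y₀ := by
    funext i
    simp [hw_def, Pi.smul_apply, smul_eq_mul]
    field_simp
    ring
  have hmem : (t / (1 + t)) * μ + (1 / (1 + t)) * ν ∈ f y₀ := by
    simpa only [Prod.smul_mk, Prod.mk_add_mk, Set.mem_setOf_eq, smul_eq_mul, hpt]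
      using hconv
  have hthis := hbd y₀ hy₀A _ hmem
  have h2 : m₀ * (1 + t) ≤ t * μ + ν := by
    have h3 := mul_le_mul_of_nonneg_right hthis (le_of_lt h1t)
    rw [add_mul, mul_comm (t / (1 + t)) μ, mul_comm (1 / (1 + t)) ν, mul_assoc, mul_assoc,
      div_mul_cancel₀ _ (ne_of_gt h1t), one_div, inv_mul_cancel₀ (ne_of_gt h1t),
      mul_one] at h3
    linarith [h3]
  rw [div_le_iff₀ ht]
  linarith
end

section
/- Let Y ⊂ ℝ^m be a nonempty open convex subset of the domain of F, and suppose F_φ (where F_φ(y) = { μ | ∃ x ∈ F(y), μ ≥ φ(x, y) }) has closed convex graph and is locally bounded from below at every point of Y. Then v(y) = inf_{x ∈ F(y)} φ(x, y) is finite for every y ∈ Y and v is a convex function on Y. -/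
theorem stmt_11 (n m : ℕ)
    (φ : (Fin n → ℝ) × (Fin m → ℝ) → ℝ)
    (F : (Fin m → ℝ) → Set (Fin n → ℝ))
    (hφ : ConvexOn ℝ Set.univ φ)
    (hFgraph : IsClosed {p : (Fin n → ℝ) × (Fin m → ℝ) | p.1 ∈ F p.2} ∧
               Convex ℝ {p : (Fin n → ℝ) × (Fin m → ℝ) | p.1 ∈ F p.2})
    (Fφ : (Fin m → ℝ) → Set ℝ)
    (hFφ : ∀ y, Fφ y = {μ : ℝ | ∃ x ∈ F y, μ ≥ φ (x, y)})
    (hFφgraph : IsClosed {p : (Fin m → ℝ) × ℝ | p.2 ∈ Fφ p.1} ∧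
                Convex ℝ {p : (Fin m → ℝ) × ℝ | p.2 ∈ Fφ p.1})
    (Y : Set (Fin m → ℝ)) (hYne : Y.Nonempty) (hYopen : IsOpen Y)
    (hYconv : Convex ℝ Y) (hYdom : ∀ y ∈ Y, (F y).Nonempty)
    (hlb : ∀ y₀ ∈ Y, ∃ m₀ : ℝ, ∃ A : Set (Fin m → ℝ), IsOpen A ∧ y₀ ∈ A ∧
      ∀ y ∈ A, ∀ μ ∈ Fφ y, m₀ ≤ μ)
    (v : (Fin m → ℝ) → EReal)
    (hv : ∀ y, v y = sInf ((fun x => (φ (x, y) : EReal)) '' F y)) :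
    (∀ y ∈ Y, ∃ r : ℝ, v y = (r : EReal)) ∧
    ConvexOn ℝ Y (fun y => (v y).toReal) := by
  -- basic facts for y ∈ Y
  have hub : ∀ y, ∀ x ∈ F y, v y ≤ ((φ (x, y) : ℝ) : EReal) := by
    intro y x hx
    rw [hv]
    exact sInf_le ⟨x, hx, rfl⟩
  have hlow : ∀ y ∈ Y, ∃ m₀ : ℝ, ((m₀ : ℝ) : EReal) ≤ v y := by
    intro y hy
    obtain ⟨m₀, A, hAopen, hyA, hA⟩ := hlb y hy
    refine ⟨m₀, ?_⟩
    rw [hv]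
    apply le_sInf
    rintro z ⟨x, hx, rfl⟩
    have : m₀ ≤ φ (x, y) := by
      apply hA y hyA
      rw [hFφ]
      exact ⟨x, hx, le_refl _⟩
    exact EReal.coe_le_coe_iff.mpr this
  have hfin : ∀ y ∈ Y, v y ≠ ⊥ ∧ v y ≠ ⊤ := by
    intro y hy
    obtain ⟨m₀, hm₀⟩ := hlow y hy
    obtain ⟨x, hx⟩ := hYdom y hy
    constructor
    · intro h; rw [h] at hm₀; exact (EReal.coe_ne_bot m₀) (le_bot_iff.mp hm₀)
    · intro h
      have := hub y x hx
      rw [h] at this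
      exact (EReal.coe_ne_top _) (top_le_iff.mp this)
  have hcoe : ∀ y ∈ Y, v y = (((v y).toReal : ℝ) : EReal) := by
    intro y hy
    exact (EReal.coe_toReal (hfin y hy).2 (hfin y hy).1).symm
  -- approximation
  have happrox : ∀ y ∈ Y, ∀ ε : ℝ, 0 < ε → ∃ x ∈ F y, φ (x, y) < (v y).toReal + ε := by
    intro y hy ε hε
    have hlt : v y < (((v y).toReal + ε : ℝ) : EReal) := by
      rw [hcoe y hy]
      exact_mod_cast lt_add_of_pos_right _ hε
    rw [hv] at hlt
    obtain ⟨z, ⟨x, hx, rfl⟩, hz⟩ := sInf_lt_iff.mp hlt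
    refine ⟨x, hx, ?_⟩
    rw [hv y]
    exact EReal.coe_lt_coe_iff.mp hz
  refine ⟨fun y hy => ⟨(v y).toReal, hcoe y hy⟩, ⟨hYconv, ?_⟩⟩
  intro y₁ hy₁ y₂ hy₂ a b ha hb hab
  have hy' : a • y₁ + b • y₂ ∈ Y := hYconv hy₁ hy₂ ha hb hab
  -- suffices to show ≤ RHS + ε for all ε > 0
  refine le_of_forall_pos_le_add ?_
  intro ε hε
  obtain ⟨x₁, hx₁, hφ₁⟩ := happrox y₁ hy₁ ε hε
  obtain ⟨x₂, hx₂, hφ₂⟩ := happrox y₂ hy₂ ε hε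
  have hm₁ : (y₁, φ (x₁, y₁)) ∈ {p : (Fin m → ℝ) × ℝ | p.2 ∈ Fφ p.1} := by
    simp only [Set.mem_setOf_eq, hFφ]; exact ⟨x₁, hx₁, le_refl _⟩
  have hm₂ : (y₂, φ (x₂, y₂)) ∈ {p : (Fin m → ℝ) × ℝ | p.2 ∈ Fφ p.1} := by
    simp only [Set.mem_setOf_eq, hFφ]; exact ⟨x₂, hx₂, le_refl _⟩
  have hconv := hFφgraph.2 hm₁ hm₂ ha hb hab
  simp only [Prod.smul_mk, Prod.mk_add_mk, Set.mem_setOf_eq, smul_eq_mul] at hconv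
  rw [hFφ] at hconv
  obtain ⟨x, hx, hxge⟩ := hconv
  have hle : v (a • y₁ + b • y₂) ≤ ((a * φ (x₁, y₁) + b * φ (x₂, y₂) : ℝ) : EReal) :=
    le_trans (hub _ x hx) (by exact_mod_cast hxge)
  have hle' : (v (a • y₁ + b • y₂)).toReal ≤ a * φ (x₁, y₁) + b * φ (x₂, y₂) := by
    rw [hcoe _ hy'] at hle
    exact_mod_cast hle
  calc (v (a • y₁ + b • y₂)).toReal ≤ a * φ (x₁, y₁) + b * φ (x₂, y₂) := hle'
    _ ≤ a * ((v y₁).toReal + ε) + b * ((v y₂).toReal + ε) := by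
        apply add_le_add
        · exact mul_le_mul_of_nonneg_left hφ₁.le ha
        · exact mul_le_mul_of_nonneg_left hφ₂.le hb
    _ = a • (v y₁).toReal + b • (v y₂).toReal + ε := by
        simp only [smul_eq_mul]; ring_nf; linear_combination ε * hab
end

section
/- Under the assumptions that Y ⊂ ℝ^m is a nonempty open convex subset of the domain of F, F_φ has closed graph equal to the epigraph of v on Y, and F_φ is locally bounded from below at y₀ ∈ Y, the value function v(y) = inf_{x ∈ F(y)} φ(x, y) is locally Lipschitz continuous at y₀. -/
theorem stmt_12 (n m : ℕ)
    (φ : (Fin n → ℝ) × (Fin m → ℝ) → ℝ)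
    (F : (Fin m → ℝ) → Set (Fin n → ℝ))
    (hφ : ConvexOn ℝ Set.univ φ)
    (hFgraph : IsClosed {p : (Fin n → ℝ) × (Fin m → ℝ) | p.1 ∈ F p.2} ∧
               Convex ℝ {p : (Fin n → ℝ) × (Fin m → ℝ) | p.1 ∈ F p.2})
    (Fφ : (Fin m → ℝ) → Set ℝ)
    (hFφ : ∀ y, Fφ y = {μ : ℝ | ∃ x ∈ F y, μ ≥ φ (x, y)})
    (v : (Fin m → ℝ) → EReal)
    (hv : ∀ y, v y = sInf (Real.toEReal '' Fφ y))
    (Y : Set (Fin m → ℝ)) (hYne : Y.Nonempty) (hYopen : IsOpen Y)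
    (hYconv : Convex ℝ Y) (hYdom : ∀ y ∈ Y, (F y).Nonempty)
    (hgraphclosed : IsClosed {p : (Fin m → ℝ) × ℝ | p.2 ∈ Fφ p.1})
    (hepi : {p : (Fin m → ℝ) × ℝ | p.1 ∈ Y ∧ p.2 ∈ Fφ p.1}
          = {p : (Fin m → ℝ) × ℝ | p.1 ∈ Y ∧ v p.1 ≤ (p.2 : EReal)})
    (y₀ : Fin m → ℝ) (hy₀ : y₀ ∈ Y)
    (hlb : ∃ m₀ : ℝ, ∃ A : Set (Fin m → ℝ), IsOpen A ∧ y₀ ∈ A ∧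
      ∀ y ∈ A, ∀ μ ∈ Fφ y, m₀ ≤ μ) :
    ∃ U ∈ nhds y₀, ∃ K : NNReal,
      LipschitzOnWith K (fun y => (v y).toReal) U := by
  obtain ⟨m₀, A, hAopen, hy₀A, hm₀⟩ := hlb
  -- a ball around y₀ inside A ∩ Y
  obtain ⟨r, hr, hball⟩ := Metric.isOpen_iff.mp (hAopen.inter hYopen) y₀ ⟨hy₀A, hy₀⟩
  set B := Metric.ball y₀ r with hB
  have hBA : B ⊆ A := fun y hy => (hball hy).1
  have hBY : B ⊆ Y := fun y hy => (hball hy).2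
  -- membership in Fφ characterized by v for y ∈ Y
  have hmem : ∀ y ∈ Y, ∀ μ : ℝ, μ ∈ Fφ y ↔ v y ≤ (μ : EReal) := by
    intro y hy μ
    have := Set.ext_iff.mp hepi (y, μ)
    simp only [Set.mem_setOf_eq] at this
    constructor
    · intro h; exact (this.mp ⟨hy, h⟩).2
    · intro h; exact (this.mpr ⟨hy, h⟩).2
  -- v is finite on B
  have hnetop : ∀ y ∈ Y, v y ≠ ⊤ := by
    intro y hy
    obtain ⟨x, hx⟩ := hYdom y hy
    have hφmem : φ (x, y) ∈ Fφ y := by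
      rw [hFφ]; exact ⟨x, hx, le_refl _⟩
    have hle : v y ≤ ((φ (x, y) : ℝ) : EReal) := by
      rw [hv]; exact sInf_le ⟨_, hφmem, rfl⟩
    exact ne_top_of_le_ne_top (EReal.coe_ne_top _) hle
  have hnebot : ∀ y ∈ B, v y ≠ ⊥ := by
    intro y hy
    have hge : ((m₀ : ℝ) : EReal) ≤ v y := by
      rw [hv]
      refine le_sInf ?_
      rintro z ⟨μ, hμ, rfl⟩
      exact_mod_cast hm₀ y (hBA hy) μ hμ
    intro h
    rw [h] at hge
    exact (EReal.coe_ne_bot m₀) (le_bot_iff.mp hge)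
  -- the inf is attained: (v y).toReal ∈ Fφ y for y ∈ B
  have hattain : ∀ y ∈ B, (v y).toReal ∈ Fφ y := by
    intro y hy
    rw [hmem y (hBY hy)]
    rw [EReal.coe_toReal (hnetop y (hBY hy)) (hnebot y hy)]
  -- convexity of toReal ∘ v on B
  have hconv : ConvexOn ℝ B (fun y => (v y).toReal) := by
    refine ⟨convex_ball y₀ r, ?_⟩
    intro y₁ hy₁ y₂ hy₂ a b ha hb hab
    obtain ⟨x₁, hx₁, hφ₁⟩ : ∃ x ∈ F y₁, (v y₁).toReal ≥ φ (x, y₁) := by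
      have := hattain y₁ hy₁; rwa [hFφ] at this
    obtain ⟨x₂, hx₂, hφ₂⟩ : ∃ x ∈ F y₂, (v y₂).toReal ≥ φ (x, y₂) := by
      have := hattain y₂ hy₂; rwa [hFφ] at this
    have hxcomb : a • x₁ + b • x₂ ∈ F (a • y₁ + b • y₂) := by
      have := hFgraph.2 (Set.mem_setOf_eq ▸ hx₁ : ((x₁, y₁) : (Fin n → ℝ) × (Fin m → ℝ)) ∈ _)
        (hx₂ : ((x₂, y₂) : (Fin n → ℝ) × (Fin m → ℝ)) ∈ _) ha hb hab
      simpa [Prod.smul_mk, Prod.mk_add_mk] using this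
    have hφcomb : φ (a • x₁ + b • x₂, a • y₁ + b • y₂)
        ≤ a * (v y₁).toReal + b * (v y₂).toReal := by
      have h1 := hφ.2 (Set.mem_univ (x₁, y₁)) (Set.mem_univ (x₂, y₂)) ha hb hab
      have h2 : a • φ (x₁, y₁) + b • φ (x₂, y₂)
          ≤ a * (v y₁).toReal + b * (v y₂).toReal := by
        simp only [smul_eq_mul]
        gcongr
      calc φ (a • x₁ + b • x₂, a • y₁ + b • y₂)
          = φ (a • (x₁, y₁) + b • (x₂, y₂)) := by rfl
        _ ≤ a • φ (x₁, y₁) + b • φ (x₂, y₂) := h1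
        _ ≤ _ := h2
    have hmemcomb : a * (v y₁).toReal + b * (v y₂).toReal ∈ Fφ (a • y₁ + b • y₂) := by
      rw [hFφ]
      exact ⟨a • x₁ + b • x₂, hxcomb, hφcomb⟩
    have hcombB : a • y₁ + b • y₂ ∈ B := (convex_ball y₀ r) hy₁ hy₂ ha hb hab
    have hle : v (a • y₁ + b • y₂)
        ≤ ((a * (v y₁).toReal + b * (v y₂).toReal : ℝ) : EReal) := by
      rw [hv]; exact sInf_le ⟨_, hmemcomb, rfl⟩
    have := EReal.toReal_le_toReal hle (hnebot _ hcombB) (EReal.coe_ne_top _)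
    rw [EReal.toReal_coe] at this
    simpa [smul_eq_mul] using this
  -- apply local Lipschitz continuity of convex functions
  have hy₀B : y₀ ∈ B := Metric.mem_ball_self hr
  obtain ⟨K, t, ht, hK⟩ := hconv.locallyLipschitzOn Metric.isOpen_ball hy₀B
  rw [nhdsWithin_eq_nhds.mpr (Metric.isOpen_ball.mem_nhds hy₀B)] at ht
  exact ⟨t, ht, K, hK⟩
end
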